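/- arXiv:math/9902096 — 5 statements merged into one kernel-verified Lean document; each statement's English description precedes it below -/
import Mathlib

section
/- Let A be an associative unital R-algebra with a cell datum (Λ, M, C, *, r). Then for each λ ∈ Λ there exists a function φ : M(λ) × M(λ) → R such that for all S₁, T₁, S₂, T₂ ∈ M(λ), the element C_{S₁,T₁}^λ · C_{S₂,T₂}^λ − φ(T₁,S₂)·C_{S₁,T₂}^λ lies in A(<λ); in particular φ(T₁,S₂) is independent of S₁ and T₂. -/
open scoped BigOperators

/-- A cell datum `(Λ, M, C, *, r)` for an associative unital `R`-algebra `A`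
(Graham–Lehrer).  `basis`/`basis_eq` say that `C` has image an `R`-basis of `A`,
`inj` says `C` is injective, `star` is the `R`-linear involutory anti-automorphism with
`(C_{S,T})* = C_{T,S}`, and `mul_C` is the multiplication axiom modulo `A(<λ)`. -/
structure CellDatum (R : Type*) [CommRing R] (A : Type*) [Ring A] [Algebra R A]
    (Λ : Type*) [PartialOrder Λ] (M : Λ → Type*) [∀ l, Fintype (M l)] where
  C : ∀ l : Λ, M l → M l → A
  inj : Function.Injective fun p : Σ l : Λ, M l × M l => C p.1 p.2.1 p.2.2
  basis : Module.Basis (Σ l : Λ, M l × M l) R A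
  basis_eq : ∀ p : Σ l : Λ, M l × M l, basis p = C p.1 p.2.1 p.2.2
  star : A →ₗ[R] A
  star_star : ∀ a : A, star (star a) = a
  star_mul : ∀ a b : A, star (a * b) = star b * star a
  star_C : ∀ (l : Λ) (S T : M l), star (C l S T) = C l T S
  r : A → ∀ l : Λ, M l → M l → R
  mul_C : ∀ (a : A) (l : Λ) (S T : M l),
    a * C l S T - ∑ S' : M l, r a l S' S • C l S' T ∈
      Submodule.span R {x : A | ∃ μ : Λ, μ < l ∧ ∃ S'' T'' : M μ, x = C μ S'' T''}

variable {R A Λ : Type*} [CommRing R] [Ring A] [Algebra R A] [PartialOrder Λ]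
  {M : Λ → Type*} [∀ l, Fintype (M l)]

/-- `A(<λ)`: the `R`-span of the cell basis elements indexed by `μ < λ`. -/
def CellDatum.Aless (D : CellDatum R A Λ M) (l : Λ) : Submodule R A :=
  Submodule.span R {x : A | ∃ μ : Λ, μ < l ∧ ∃ S'' T'' : M μ, x = D.C μ S'' T''}

/-- A coideal of the poset `Λ`: a subset closed upwards. -/
def IsCoideal {Λ : Type*} [PartialOrder Λ] (P : Set Λ) : Prop :=
  ∀ ⦃a b : Λ⦄, a ∈ P → a < b → b ∈ P

/-- `I_P`: the `R`-span of the cell basis elements `C_{S,T}^λ` with `λ ∉ P`. -/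
def CellDatum.IP (D : CellDatum R A Λ M) (P : Set Λ) : Submodule R A :=
  Submodule.span R {x : A | ∃ l : Λ, l ∉ P ∧ ∃ S T : M l, x = D.C l S T}

-- Aless as span of basis image
lemma Aless_eq (D : CellDatum R A Λ M) (l : Λ) :
    D.Aless l = Submodule.span R (D.basis '' {p : Σ l : Λ, M l × M l | p.1 < l}) := by
  unfold CellDatum.Aless
  congr 1
  ext x
  constructor
  · rintro ⟨μ, hμ, S, T, rfl⟩
    exact ⟨⟨μ, S, T⟩, hμ, D.basis_eq _⟩
  · rintro ⟨⟨μ, S, T⟩, hμ, rfl⟩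
    exact ⟨μ, hμ, S, T, D.basis_eq ⟨μ, (S, T)⟩⟩

lemma repr_Aless (D : CellDatum R A Λ M) {l : Λ} {x : A} (hx : x ∈ D.Aless l)
    (S T : M l) : D.basis.repr x ⟨l, S, T⟩ = 0 := by
  rw [Aless_eq] at hx
  rw [Module.Basis.mem_span_image] at hx
  by_contra h
  exact lt_irrefl l (hx (Finsupp.mem_support_iff.2 h))

lemma repr_star (D : CellDatum R A Λ M) (x : A) (μ : Λ) (S T : M μ) :
    D.basis.repr (D.star x) ⟨μ, T, S⟩ = D.basis.repr x ⟨μ, S, T⟩ := by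
  classical
  have h : (Finsupp.lapply (⟨μ, T, S⟩ : Σ l : Λ, M l × M l)).comp
        (D.basis.repr.toLinearMap.comp D.star)
      = (Finsupp.lapply (⟨μ, S, T⟩ : Σ l : Λ, M l × M l)).comp
        D.basis.repr.toLinearMap := by
    apply Module.Basis.ext D.basis
    rintro ⟨ν, U, V⟩
    simp only [LinearMap.comp_apply, LinearEquiv.coe_toLinearMap, Finsupp.lapply_apply]
    rw [D.basis_eq ⟨ν, (U, V)⟩, D.star_C, ← D.basis_eq ⟨ν, (V, U)⟩,
      ← D.basis_eq ⟨ν, (U, V)⟩, Module.Basis.repr_self, Module.Basis.repr_self,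
      Finsupp.single_apply, Finsupp.single_apply]
    congr 1
    simp only [eq_iff_iff]
    constructor
    · rintro h
      obtain ⟨rfl, h2⟩ := Sigma.mk.inj_iff.1 h
      simp only [heq_eq_eq, Prod.mk.injEq] at h2
      obtain ⟨rfl, rfl⟩ := h2
      rfl
    · rintro h
      obtain ⟨rfl, h2⟩ := Sigma.mk.inj_iff.1 h
      simp only [heq_eq_eq, Prod.mk.injEq] at h2
      obtain ⟨rfl, rfl⟩ := h2
      rfl
  exact LinearMap.congr_fun h x

lemma sigma_ne (l : Λ) {S T S' T' : M l} (h : ¬(S' = S ∧ T' = T)) :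
    (⟨l, (S, T)⟩ : Σ l : Λ, M l × M l) ≠ ⟨l, (S', T')⟩ := by
  intro he
  obtain ⟨-, h2⟩ := Sigma.mk.inj_iff.1 he
  simp only [heq_eq_eq, Prod.mk.injEq] at h2
  exact h ⟨h2.1.symm, h2.2.symm⟩

lemma repr_mul (D : CellDatum R A Λ M) (a : A) (l : Λ) (S T S' T' : M l) :
    D.basis.repr (a * D.C l S T) ⟨l, S', T'⟩
      = D.basis.repr (∑ S'' : M l, D.r a l S'' S • D.C l S'' T) ⟨l, S', T'⟩ := by
  have hy : a * D.C l S T - ∑ S'' : M l, D.r a l S'' S • D.C l S'' T ∈ D.Aless l :=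
    D.mul_C a l S T
  have h := repr_Aless D hy S' T'
  rw [map_sub, Finsupp.sub_apply, sub_eq_zero] at h
  exact h

open scoped Classical in
lemma repr_single (D : CellDatum R A Λ M) (l : Λ) (S T S' T' : M l) :
    D.basis.repr (D.C l S T) ⟨l, S', T'⟩ = if S' = S ∧ T' = T then 1 else 0 := by
  classical
  rw [← D.basis_eq ⟨l, (S, T)⟩, Module.Basis.repr_self, Finsupp.single_apply]
  by_cases h : S' = S ∧ T' = T
  · obtain ⟨rfl, rfl⟩ := h; simp
  · rw [if_neg h, if_neg (sigma_ne l h)]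

lemma repr_mul_eq (D : CellDatum R A Λ M) (a : A) (l : Λ) (S T S' : M l) :
    D.basis.repr (a * D.C l S T) ⟨l, S', T⟩ = D.r a l S' S := by
  classical
  rw [repr_mul, map_sum, Finsupp.finset_sum_apply]
  rw [Finset.sum_eq_single S']
  · rw [map_smul, Finsupp.smul_apply, repr_single, if_pos ⟨rfl, rfl⟩, smul_eq_mul, mul_one]
  · intro b _ hb
    rw [map_smul, Finsupp.smul_apply, repr_single,
      if_neg (fun h => hb h.1.symm), smul_zero]
  · intro h; exact absurd (Finset.mem_univ S') h

lemma repr_mul_ne (D : CellDatum R A Λ M) (a : A) (l : Λ) (S T S' T' : M l)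
    (hT : T' ≠ T) : D.basis.repr (a * D.C l S T) ⟨l, S', T'⟩ = 0 := by
  classical
  rw [repr_mul, map_sum, Finsupp.finset_sum_apply]
  apply Finset.sum_eq_zero
  intro b _
  rw [map_smul, Finsupp.smul_apply, repr_single, if_neg (fun h => hT h.2), smul_zero]

/-- for each `λ ∈ Λ` there is a function `φ : M(λ) × M(λ) → R` such that
`C_{S₁,T₁} · C_{S₂,T₂} ≡ φ(T₁,S₂) · C_{S₁,T₂}` modulo `A(<λ)`; in particular `φ(T₁,S₂)`
is independent of `S₁` and `T₂`. -/
theorem cellular_bilinear_form_exists (R A Λ : Type*) [CommRing R] [Ring A] [Algebra R A]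
    [PartialOrder Λ] (M : Λ → Type*) [∀ l, Fintype (M l)] (D : CellDatum R A Λ M)
    (l : Λ) :
    ∃ φ : M l → M l → R, ∀ S₁ T₁ S₂ T₂ : M l,
      D.C l S₁ T₁ * D.C l S₂ T₂ - φ T₁ S₂ • D.C l S₁ T₂ ∈ D.Aless l := by
  classical
  refine ⟨fun T₁ S₂ => D.r (D.C l T₁ T₁) l T₁ S₂, ?_⟩
  intro S₁ T₁ S₂ T₂
  have key : ∀ S₁ T₁ S₂ T₂ : M l,
      D.r (D.C l S₁ T₁) l S₁ S₂ = D.r (D.C l T₂ S₂) l T₂ T₁ := by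
    intro S₁ T₁ S₂ T₂
    have h1 := repr_mul_eq D (D.C l S₁ T₁) l S₂ T₂ S₁
    have h2 := repr_star D (D.C l S₁ T₁ * D.C l S₂ T₂) l S₁ T₂
    rw [D.star_mul, D.star_C, D.star_C] at h2
    rw [← h1, ← h2, repr_mul_eq]
  have hzero : ∀ S' : M l, S' ≠ S₁ → D.r (D.C l S₁ T₁) l S' S₂ = 0 := by
    intro S' hS'
    have h1 := repr_mul_eq D (D.C l S₁ T₁) l S₂ T₂ S'
    have h2 := repr_star D (D.C l S₁ T₁ * D.C l S₂ T₂) l S' T₂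
    rw [D.star_mul, D.star_C, D.star_C] at h2
    rw [← h1, ← h2, repr_mul_ne D _ l T₁ S₁ T₂ S' hS']
  have hphi : D.r (D.C l S₁ T₁) l S₁ S₂ = D.r (D.C l T₁ T₁) l T₁ S₂ := by
    rw [key S₁ T₁ S₂ T₁, ← key T₁ T₁ S₂ T₁]
  have hsum : (∑ S' : M l, D.r (D.C l S₁ T₁) l S' S₂ • D.C l S' T₂)
      = D.r (D.C l T₁ T₁) l T₁ S₂ • D.C l S₁ T₂ := by
    rw [Finset.sum_eq_single S₁]
    · rw [hphi]
    · intro b _ hb; rw [hzero b hb, zero_smul]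
    · intro h; exact absurd (Finset.mem_univ S₁) h
  have h := D.mul_C (D.C l S₁ T₁) l S₂ T₂
  rw [hsum] at h
  exact h
end

section
/- Let A be an associative unital R-algebra with a cell datum (Λ, M, C, *, r) and let P be a coideal of Λ. Then the R-submodule I_P of A is a two-sided ideal of A: for all a ∈ A and x ∈ I_P, both a·x ∈ I_P and x·a ∈ I_P. -/
open scoped BigOperators

variable {R A Λ : Type*} [CommRing R] [Ring A] [Algebra R A] [PartialOrder Λ]
  {M : Λ → Type*} [∀ l, Fintype (M l)]

/-- for a coideal `P` of `Λ`, the `R`-submodule `I_P` of `A` is a two-sided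
ideal: for all `a ∈ A` and `x ∈ I_P`, both `a·x ∈ I_P` and `x·a ∈ I_P`. -/
theorem IP_is_two_sided_ideal (R A Λ : Type*) [CommRing R] [Ring A] [Algebra R A]
    [PartialOrder Λ] (M : Λ → Type*) [∀ l, Fintype (M l)] (D : CellDatum R A Λ M)
    (P : Set Λ) (hP : IsCoideal P) :
    ∀ (a : A) (x : A), x ∈ D.IP P → a * x ∈ D.IP P ∧ x * a ∈ D.IP P := by
  -- A(<l) ⊆ I_P when l ∉ P
  have hAless : ∀ l : Λ, l ∉ P → D.Aless l ≤ D.IP P := by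
    intro l hl
    apply Submodule.span_le.2
    rintro x ⟨μ, hμl, S, T, rfl⟩
    exact Submodule.subset_span ⟨μ, fun hμ => hl (hP hμ hμl), S, T, rfl⟩
  -- generators are in I_P
  have hgen : ∀ (l : Λ), l ∉ P → ∀ (S T : M l), D.C l S T ∈ D.IP P := fun l hl S T =>
    Submodule.subset_span ⟨l, hl, S, T, rfl⟩
  -- left multiplication stability
  have hleft : ∀ (a x : A), x ∈ D.IP P → a * x ∈ D.IP P := by
    intro a x hx
    induction hx using Submodule.span_induction with
    | mem y hy =>
      obtain ⟨l, hl, S, T, rfl⟩ := hy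
      have h1 : a * D.C l S T - ∑ S' : M l, D.r a l S' S • D.C l S' T ∈ D.IP P :=
        hAless l hl (D.mul_C a l S T)
      have h2 : (∑ S' : M l, D.r a l S' S • D.C l S' T) ∈ D.IP P :=
        Submodule.sum_mem _ fun S' _ => Submodule.smul_mem _ _ (hgen l hl S' T)
      have := Submodule.add_mem _ h1 h2
      simpa using this
    | zero => simpa using Submodule.zero_mem (D.IP P)
    | add y z _ _ hy hz => simpa [mul_add] using Submodule.add_mem _ hy hz
    | smul c y _ hy => simpa [mul_smul_comm] using Submodule.smul_mem _ c hy
  -- star stability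
  have hstar : ∀ x ∈ D.IP P, D.star x ∈ D.IP P := by
    intro x hx
    induction hx using Submodule.span_induction with
    | mem y hy =>
      obtain ⟨l, hl, S, T, rfl⟩ := hy
      rw [D.star_C]
      exact hgen l hl T S
    | zero => simpa using Submodule.zero_mem (D.IP P)
    | add y z _ _ hy hz => simpa [map_add] using Submodule.add_mem _ hy hz
    | smul c y _ hy => simpa [map_smul] using Submodule.smul_mem _ c hy
  intro a x hx
  refine ⟨hleft a x hx, ?_⟩
  have : x * a = D.star (D.star a * D.star x) := by
    rw [D.star_mul, D.star_star, D.star_star]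
  rw [this]
  exact hstar _ (hleft (D.star a) (D.star x) (hstar x hx))
end

section
/- Let A be an associative unital R-algebra with a cell datum (Λ, M, C, *, r) of profinite type, and let Â be the associated procellular algebra. Then the R-linear map Φ from the R-module of all functions f : ∐_{λ∈Λ} M(λ) × M(λ) → R to ∏_{P∈Π} A_P, defined by sending f to the family whose P-th component is the (finite) sum Σ_{λ∈P, T,T'∈M(λ)} f(T,T')·ψ_P(C_{T,T'}^λ), is injective and its image is exactly Â. In other words, the elements of Â correspond bijectively to formal infinite sums Σ a(T,T')·C(T,T') with arbitrary coefficients a(T,T') ∈ R. -/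
open scoped BigOperators

variable {R A Λ : Type*} [CommRing R] [Ring A] [Algebra R A] [PartialOrder Λ]
  {M : Λ → Type*} [∀ l, Fintype (M l)]

/-- `Π`: the set of finite coideals of `Λ`. -/
def FiniteCoideal (Λ : Type*) [PartialOrder Λ] : Type _ :=
  {P : Set Λ // P.Finite ∧ IsCoideal P}

/-- The map `Φ` sending a coefficient function `f` on `∐_{λ∈Λ} M(λ) × M(λ)` to the family
whose `P`-th component is the (finite) sum `Σ_{λ∈P, T,T'∈M(λ)} f(T,T')·ψ_P(C_{T,T'}^λ)`
in `A_P = A/I_P`.  Here `J P` is the two-sided ideal with underlying set `I_P`. -/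
noncomputable def PhiMap (D : CellDatum R A Λ M)
    (J : ∀ _ : FiniteCoideal Λ, TwoSidedIdeal A) :
    ((Σ l : Λ, M l × M l) → R) →
      ∀ P : FiniteCoideal Λ, RingCon.Quotient (J P).ringCon :=
  fun f P => ∑ᶠ p ∈ {p : Σ l : Λ, M l × M l | p.1 ∈ P.1},
    f p • RingCon.mk' (J P).ringCon (D.C p.1 p.2.1 p.2.2)

/-- The procellular algebra `Â`, realised inside `∏_{P∈Π} A_P` as the families
`(a_P)_P` such that `ψ_{P₁,P₂}(a_{P₁}) = a_{P₂}` whenever `P₂ ⊆ P₁` (equivalently,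
any lift `a ∈ A` of `a_{P₁}` maps to `a_{P₂}` under `ψ_{P₂}`). -/
def Procellular (D : CellDatum R A Λ M)
    (J : ∀ _ : FiniteCoideal Λ, TwoSidedIdeal A) :
    Set (∀ P : FiniteCoideal Λ, RingCon.Quotient (J P).ringCon) :=
  {x | ∀ P₁ P₂ : FiniteCoideal Λ, P₂.1 ⊆ P₁.1 → ∀ a : A,
    RingCon.mk' (J P₁).ringCon a = x P₁ → RingCon.mk' (J P₂).ringCon a = x P₂}


section Aux

variable {R A Λ : Type*} [CommRing R] [Ring A] [Algebra R A] [PartialOrder Λ]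
  {M : Λ → Type*} [∀ l, Fintype (M l)]

lemma finP_aux (P : FiniteCoideal Λ) : {p : Σ l : Λ, M l × M l | p.1 ∈ P.1}.Finite := by
  have h : {p : Σ l : Λ, M l × M l | p.1 ∈ P.1} =
      ⋃ l ∈ P.1, Set.range (fun m : M l × M l => (⟨l, m⟩ : Σ l : Λ, M l × M l)) := by
    ext p
    simp only [Set.mem_setOf_eq, Set.mem_iUnion, Set.mem_range]
    constructor
    · intro h; exact ⟨p.1, h, p.2, rfl⟩
    · rintro ⟨l, hl, m, rfl⟩; exact hl
  rw [h]
  exact P.2.1.biUnion fun l _ => Set.finite_range _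

lemma PhiMap_eq (D : CellDatum R A Λ M) (J : ∀ _ : FiniteCoideal Λ, TwoSidedIdeal A)
    (f : (Σ l : Λ, M l × M l) → R) (P : FiniteCoideal Λ) :
    PhiMap D J f P = RingCon.mk' (J P).ringCon
      (∑ p ∈ (finP_aux (M := M) P).toFinset, f p • D.C p.1 p.2.1 p.2.2) := by
  show ∑ᶠ p ∈ {p : Σ l : Λ, M l × M l | p.1 ∈ P.1},
      f p • RingCon.mk' (J P).ringCon (D.C p.1 p.2.1 p.2.2) = _
  rw [finsum_mem_eq_finite_toFinset_sum _ (finP_aux (M := M) P), map_sum]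
  rfl

lemma mem_IP_iff (D : CellDatum R A Λ M) (P : Set Λ) (x : A) :
    x ∈ D.IP P ↔ ∀ p : Σ l : Λ, M l × M l, p.1 ∈ P → D.basis.repr x p = 0 := by
  have hset : {x : A | ∃ l : Λ, l ∉ P ∧ ∃ S T : M l, x = D.C l S T} =
      D.basis '' {p : Σ l : Λ, M l × M l | p.1 ∉ P} := by
    ext y
    constructor
    · rintro ⟨l, hl, S, T, rfl⟩; exact ⟨⟨l, S, T⟩, hl, D.basis_eq ⟨l, S, T⟩⟩
    · rintro ⟨⟨l, S, T⟩, hl, rfl⟩; exact ⟨l, hl, S, T, D.basis_eq ⟨l, S, T⟩⟩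
  rw [CellDatum.IP, hset, Module.Basis.mem_span_image]
  constructor
  · intro h p hp
    by_contra h0
    exact h (Finsupp.mem_support_iff.2 h0) hp
  · intro h q hq
    exact fun hqP => Finsupp.mem_support_iff.1 hq (h q hqP)

open scoped Classical in
lemma repr_sum_aux (D : CellDatum R A Λ M) (T : Finset (Σ l : Λ, M l × M l))
    (g : (Σ l : Λ, M l × M l) → R) (q : Σ l : Λ, M l × M l) :
    D.basis.repr (∑ p ∈ T, g p • D.C p.1 p.2.1 p.2.2) q = if q ∈ T then g q else 0 := by
  classical
  simp only [← D.basis_eq, map_sum, map_smul, Module.Basis.repr_self,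
    Finsupp.coe_finset_sum, Finset.sum_apply, Finsupp.smul_apply, Finsupp.single_apply,
    smul_eq_mul, mul_ite, mul_one, mul_zero]
  exact Finset.sum_ite_eq' T q g

lemma mk_eq_iff (D : CellDatum R A Λ M) (J : ∀ _ : FiniteCoideal Λ, TwoSidedIdeal A)
    (hJ : ∀ (P : FiniteCoideal Λ) (x : A), x ∈ J P ↔ x ∈ D.IP P.1)
    (P : FiniteCoideal Λ) (a b : A) :
    RingCon.mk' (J P).ringCon a = RingCon.mk' (J P).ringCon b ↔ a - b ∈ D.IP P.1 := by
  have hc : ∀ x : A, RingCon.mk' (J P).ringCon x = (x : (J P).ringCon.Quotient) :=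
    fun _ => rfl
  rw [hc, hc, RingCon.eq, TwoSidedIdeal.rel_iff, ← hJ]

end Aux

/-- for a cell datum of profinite type, the `R`-linear map `Φ` from
coefficient functions to `∏_{P∈Π} A_P` is injective with image exactly the procellular
algebra `Â`; i.e. elements of `Â` correspond bijectively to formal infinite sums
`Σ a(T,T')·C(T,T')`. -/
theorem procellular_eq_formal_sums (R A Λ : Type*) [CommRing R] [Ring A] [Algebra R A]
    [PartialOrder Λ] (M : Λ → Type*) [∀ l, Fintype (M l)] (D : CellDatum R A Λ M)
    (hinf : Infinite Λ) (hprofin : ∀ a : Λ, {l : Λ | a ≤ l}.Finite)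
    (J : ∀ _ : FiniteCoideal Λ, TwoSidedIdeal A)
    (hJ : ∀ (P : FiniteCoideal Λ) (x : A), x ∈ J P ↔ x ∈ D.IP P.1) :
    (∀ f g : (Σ l : Λ, M l × M l) → R, PhiMap D J (f + g) = PhiMap D J f + PhiMap D J g) ∧
    (∀ (c : R) (f : (Σ l : Λ, M l × M l) → R), PhiMap D J (c • f) = c • PhiMap D J f) ∧
    Function.Injective (PhiMap D J) ∧
    Set.range (PhiMap D J) = Procellular D J := by
  classical
  have key : ∀ (f : (Σ l : Λ, M l × M l) → R) (P : FiniteCoideal Λ) (a : A),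
      RingCon.mk' (J P).ringCon a = PhiMap D J f P →
      ∀ p : Σ l : Λ, M l × M l, p.1 ∈ P.1 → D.basis.repr a p = f p := by
    intro f P a ha p hp
    rw [PhiMap_eq, mk_eq_iff D J hJ] at ha
    have h0 := (mem_IP_iff D P.1 _).1 ha p hp
    have hpT : p ∈ (finP_aux (M := M) P).toFinset := by
      simpa [Set.Finite.mem_toFinset] using hp
    rw [map_sub, Finsupp.sub_apply, repr_sum_aux, sub_eq_zero] at h0
    simpa [hpT] using h0
  refine ⟨?_, ?_, ?_, ?_⟩
  · intro f g
    funext P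
    rw [Pi.add_apply, PhiMap_eq, PhiMap_eq, PhiMap_eq, ← map_add, ← Finset.sum_add_distrib]
    congr 1
    refine Finset.sum_congr rfl fun p _ => ?_
    rw [Pi.add_apply, add_smul]
  · intro c f
    funext P
    rw [Pi.smul_apply, PhiMap_eq, PhiMap_eq]
    have hsm : c • RingCon.mk' (J P).ringCon
        (∑ p ∈ (finP_aux (M := M) P).toFinset, f p • D.C p.1 p.2.1 p.2.2) =
        RingCon.mk' (J P).ringCon
        (c • ∑ p ∈ (finP_aux (M := M) P).toFinset, f p • D.C p.1 p.2.1 p.2.2) := rfl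
    rw [hsm, Finset.smul_sum]
    congr 1
    refine Finset.sum_congr rfl fun p _ => ?_
    rw [Pi.smul_apply, smul_smul, smul_eq_mul]
  · intro f g h
    funext p
    set P : FiniteCoideal Λ :=
      ⟨{μ : Λ | p.1 ≤ μ}, hprofin p.1, fun a b ha hab => ha.trans hab.le⟩ with hP
    have hpP : p.1 ∈ P.1 := le_refl p.1
    set s : A := ∑ q ∈ (finP_aux (M := M) P).toFinset, f q • D.C q.1 q.2.1 q.2.2 with hs
    have hf : RingCon.mk' (J P).ringCon s = PhiMap D J f P := (PhiMap_eq D J f P).symm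
    have hg : RingCon.mk' (J P).ringCon s = PhiMap D J g P := hf.trans (congrFun h P)
    rw [← key f P s hf p hpP, ← key g P s hg p hpP]
  · ext x
    constructor
    · rintro ⟨f, rfl⟩
      intro P₁ P₂ hsub a ha
      rw [PhiMap_eq, mk_eq_iff D J hJ, mem_IP_iff] at ha ⊢
      intro p hp
      have hp1 : p.1 ∈ P₁.1 := hsub hp
      have h1 := ha p hp1
      have hpT1 : p ∈ (finP_aux (M := M) P₁).toFinset := by
        simpa [Set.Finite.mem_toFinset] using hp1
      have hpT2 : p ∈ (finP_aux (M := M) P₂).toFinset := by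
        simpa [Set.Finite.mem_toFinset] using hp
      rw [map_sub, Finsupp.sub_apply, repr_sum_aux] at h1 ⊢
      simp only [hpT1, if_true] at h1
      simpa [hpT2] using h1
    · intro hx
      have hPl : ∀ l : Λ, IsCoideal {μ : Λ | l ≤ μ} :=
        fun l a b ha hab => ha.trans hab.le
      let Pl : Λ → FiniteCoideal Λ := fun l => ⟨{μ : Λ | l ≤ μ}, hprofin l, hPl l⟩
      have hsurj : ∀ l : Λ, ∃ a : A, RingCon.mk' (J (Pl l)).ringCon a = x (Pl l) :=
        fun l => Quot.exists_rep _
      choose a ha using hsurj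
      refine ⟨fun p => D.basis.repr (a p.1) p, ?_⟩
      funext P
      obtain ⟨b, hb⟩ : ∃ b : A, RingCon.mk' (J P).ringCon b = x P := Quot.exists_rep _
      rw [PhiMap_eq, ← hb, mk_eq_iff D J hJ, mem_IP_iff]
      intro q hq
      have hqT : q ∈ (finP_aux (M := M) P).toFinset := by
        simpa [Set.Finite.mem_toFinset] using hq
      rw [map_sub, Finsupp.sub_apply, repr_sum_aux, sub_eq_zero]
      have hsub : (Pl q.1).1 ⊆ P.1 := by
        intro μ hμ
        rcases eq_or_lt_of_le (hμ : q.1 ≤ μ) with h | h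
        · exact h ▸ hq
        · exact P.2.2 hq h
      have hcomp := hx P (Pl q.1) hsub b hb
      have hdiff : b - a q.1 ∈ D.IP (Pl q.1).1 :=
        (mk_eq_iff D J hJ _ _ _).1 (hcomp.trans (ha q.1).symm)
      have h0 := (mem_IP_iff D _ _).1 hdiff q (le_refl q.1)
      rw [map_sub, Finsupp.sub_apply, sub_eq_zero] at h0
      simpa [hqT] using h0.symm
end

section
/- Let A be an associative unital R-algebra with a cell datum (Λ, M, C, *, r) of profinite type, and let Â be the associated procellular algebra. Then the canonical map ι : A → ∏_{P∈Π} A_P given by ι(a) = (ψ_P(a))_{P∈Π} takes values in Â, is an injective algebra homomorphism, and has dense image in the following sense: for every element â = (â_P)_{P∈Π} of Â and every finite coideal P ∈ Π, there exists a ∈ A with ψ_P(a) = â_P (i.e. â − ι(a) lies in the kernel Î_P of the projection Â → A_P). -/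
open scoped BigOperators

variable {R A Λ : Type*} [CommRing R] [Ring A] [Algebra R A] [PartialOrder Λ]
  {M : Λ → Type*} [∀ l, Fintype (M l)]

/-- for a cell datum of profinite type, the canonical map
`ι : A → ∏_{P∈Π} A_P`, `ι(a) = (ψ_P(a))_P`, takes values in `Â`, is an injective algebra
homomorphism, and has dense image: for every `â ∈ Â` and every `P ∈ Π` there is `a ∈ A`
with `ψ_P(a) = â_P`. -/
theorem canonical_embedding_dense (R A Λ : Type*) [CommRing R] [Ring A] [Algebra R A]
    [PartialOrder Λ] (M : Λ → Type*) [∀ l, Fintype (M l)] (D : CellDatum R A Λ M)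
    (hinf : Infinite Λ) (hprofin : ∀ a : Λ, {l : Λ | a ≤ l}.Finite)
    (J : ∀ _ : FiniteCoideal Λ, TwoSidedIdeal A)
    (hJ : ∀ (P : FiniteCoideal Λ) (x : A), x ∈ J P ↔ x ∈ D.IP P.1) :
    (∀ a : A, (fun P : FiniteCoideal Λ => RingCon.mk' (J P).ringCon a) ∈
        Procellular D J) ∧
    Function.Injective
      (fun (a : A) (P : FiniteCoideal Λ) => RingCon.mk' (J P).ringCon a) ∧
    (∀ a b : A, (fun P : FiniteCoideal Λ => RingCon.mk' (J P).ringCon (a + b)) =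
        (fun P => RingCon.mk' (J P).ringCon a) + fun P => RingCon.mk' (J P).ringCon b) ∧
    (∀ a b : A, (fun P : FiniteCoideal Λ => RingCon.mk' (J P).ringCon (a * b)) =
        (fun P => RingCon.mk' (J P).ringCon a) * fun P => RingCon.mk' (J P).ringCon b) ∧
    ((fun P : FiniteCoideal Λ => RingCon.mk' (J P).ringCon (1 : A)) = 1) ∧
    (∀ (c : R) (a : A),
        (fun P : FiniteCoideal Λ => RingCon.mk' (J P).ringCon (c • a)) =
          c • fun P : FiniteCoideal Λ => RingCon.mk' (J P).ringCon a) ∧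
    (∀ x ∈ Procellular D J, ∀ P : FiniteCoideal Λ,
        ∃ a : A, RingCon.mk' (J P).ringCon a = x P) := by
  classical
  have hIP : ∀ P : FiniteCoideal Λ, D.IP P.1 ≤
      Submodule.span R (⇑D.basis '' {q : Σ l : Λ, M l × M l | q.1 ∉ P.1}) := by
    intro P
    apply Submodule.span_le.2
    rintro x ⟨l, hl, S, T, rfl⟩
    exact Submodule.subset_span ⟨⟨l, S, T⟩, hl, D.basis_eq ⟨l, S, T⟩⟩
  have hmono : ∀ P₁ P₂ : FiniteCoideal Λ, P₂.1 ⊆ P₁.1 → D.IP P₁.1 ≤ D.IP P₂.1 := by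
    intro P₁ P₂ hsub
    apply Submodule.span_mono
    rintro x ⟨l, hl, S, T, rfl⟩
    exact ⟨l, fun h => hl (hsub h), S, T, rfl⟩
  have key : ∀ (P : FiniteCoideal Λ) (a b : A),
      RingCon.mk' (J P).ringCon a = RingCon.mk' (J P).ringCon b ↔ a - b ∈ D.IP P.1 := by
    intro P a b
    rw [show RingCon.mk' (J P).ringCon a = (a : RingCon.Quotient (J P).ringCon) from rfl,
      show RingCon.mk' (J P).ringCon b = (b : RingCon.Quotient (J P).ringCon) from rfl,
      RingCon.eq, TwoSidedIdeal.rel_iff, hJ]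
  refine ⟨?_, ?_, ?_, ?_, ?_, ?_, ?_⟩
  · intro a P₁ P₂ hsub b hb
    simp only at hb ⊢
    rw [key] at hb ⊢
    exact hmono P₁ P₂ hsub hb
  · intro a b h
    have hPmem : ∀ P : FiniteCoideal Λ, a - b ∈ D.IP P.1 := by
      intro P
      rw [← key]
      exact congrFun h P
    have hrepr : D.basis.repr (a - b) = 0 := by
      ext p
      have hco : IsCoideal {l : Λ | p.1 ≤ l} := fun u v hu huv =>
        le_trans hu (le_of_lt huv)
      set P : FiniteCoideal Λ := ⟨{l : Λ | p.1 ≤ l}, hprofin p.1, hco⟩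
      have hmem := hIP P (hPmem P)
      rw [Module.Basis.mem_span_image] at hmem
      by_contra hne
      have : p ∈ (D.basis.repr (a - b)).support := Finsupp.mem_support_iff.2 hne
      exact (hmem this) (le_refl p.1)
    exact sub_eq_zero.mp (D.basis.repr.map_eq_zero_iff.mp hrepr)
  · intro a b
    funext P
    exact map_add (RingCon.mk' (J P).ringCon) a b
  · intro a b
    funext P
    exact map_mul (RingCon.mk' (J P).ringCon) a b
  · funext P
    exact map_one (RingCon.mk' (J P).ringCon)
  · intro c a
    funext P
    exact RingCon.coe_smul _ c a
  · intro x _ P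
    obtain ⟨a, ha⟩ := Quot.exists_rep (x P)
    exact ⟨a, ha⟩
end

section
/- Let R be a field and A an associative unital R-algebra with a cell datum (Λ, M, C, *, r). Fix λ ∈ Λ, let W(λ) be the cell representation of A corresponding to λ, and let φ : M(λ) × M(λ) → R satisfy C_{S₁,T₁}^λ · C_{S₂,T₂}^λ − φ(T₁,S₂)·C_{S₁,T₂}^λ ∈ A(<λ) for all S₁,T₁,S₂,T₂ ∈ M(λ); let φ_λ be the bilinear form on W(λ) with φ_λ(C_S, C_T) = φ(S,T). Then the radical rad(λ) := {x ∈ W(λ) : φ_λ(x,y) = 0 for all y ∈ W(λ)} is an A-submodule of W(λ), and if φ is not identically zero then the quotient module W(λ)/rad(λ) is a simple A-module. -/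
open scoped BigOperators

variable {R A Λ : Type*} [CommRing R] [Ring A] [Algebra R A] [PartialOrder Λ]
  {M : Λ → Type*} [∀ l, Fintype (M l)]

section Aux
variable (D : CellDatum R A Λ M)

lemma CD.mul_C' (a : A) (l : Λ) (S T : M l) :
    a * D.C l S T - ∑ S' : M l, D.r a l S' S • D.C l S' T ∈ D.Aless l :=
  D.mul_C a l S T

lemma CD.Aless_mono {μ l : Λ} (h : μ < l) : D.Aless μ ≤ D.Aless l := by
  apply Submodule.span_le.2
  rintro x ⟨ν, hν, S, T, rfl⟩
  exact Submodule.subset_span ⟨ν, lt_trans hν h, S, T, rfl⟩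

lemma CD.mul_mem {l : Λ} (a : A) {x : A} (hx : x ∈ D.Aless l) : a * x ∈ D.Aless l := by
  have H : D.Aless l ≤ (D.Aless l).comap (LinearMap.mulLeft R a) := by
    apply Submodule.span_le.2
    rintro y ⟨μ, hμ, S, T, rfl⟩
    show a * D.C μ S T ∈ D.Aless l
    have h1 := CD.mul_C' D a μ S T
    have h2 : a * D.C μ S T =
        (a * D.C μ S T - ∑ S' : M μ, D.r a μ S' S • D.C μ S' T)
          + ∑ S' : M μ, D.r a μ S' S • D.C μ S' T := by abel
    rw [h2]
    exact Submodule.add_mem _ (CD.Aless_mono D hμ h1)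
      (Submodule.sum_mem _ fun S' _ => Submodule.smul_mem _ _
        (Submodule.subset_span ⟨μ, hμ, S', T, rfl⟩))
  exact H hx

lemma CD.star_mem {l : Λ} {x : A} (hx : x ∈ D.Aless l) : D.star x ∈ D.Aless l := by
  have H : D.Aless l ≤ (D.Aless l).comap D.star := by
    apply Submodule.span_le.2
    rintro y ⟨μ, hμ, S, T, rfl⟩
    show D.star (D.C μ S T) ∈ D.Aless l
    rw [D.star_C]
    exact Submodule.subset_span ⟨μ, hμ, T, S, rfl⟩
  exact H hx

lemma CD.mem_mul {l : Λ} (a : A) {x : A} (hx : x ∈ D.Aless l) : x * a ∈ D.Aless l := by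
  have h1 : D.star (D.star a * D.star x) = x * a := by
    rw [D.star_mul, D.star_star, D.star_star]
  rw [← h1]
  exact CD.star_mem D (CD.mul_mem D _ (CD.star_mem D hx))

lemma CD.indep {l : Λ} (c : M l → R) (V : M l)
    (h : (∑ S' : M l, c S' • D.C l S' V) ∈ D.Aless l) (S₀ : M l) : c S₀ = 0 := by
  classical
  have hsub : D.Aless l ≤
      Submodule.span R (⇑D.basis '' {p : Σ l : Λ, M l × M l | p.1 < l}) := by
    apply Submodule.span_le.2
    rintro x ⟨μ, hμ, S, T, rfl⟩
    exact Submodule.subset_span ⟨⟨μ, S, T⟩, hμ, D.basis_eq _⟩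
  have hmem := D.basis.mem_span_image.1 (hsub h)
  have hC : ∀ S' : M l, D.C l S' V = D.basis ⟨l, (S', V)⟩ :=
    fun S' => (D.basis_eq ⟨l, (S', V)⟩).symm
  have hrepr : D.basis.repr (∑ S' : M l, c S' • D.C l S' V) ⟨l, (S₀, V)⟩ = c S₀ := by
    simp_rw [hC]
    rw [map_sum]
    simp only [map_smul, Module.Basis.repr_self, Finsupp.coe_finset_sum, Finset.sum_apply,
      Finsupp.smul_apply, smul_eq_mul]
    rw [Finset.sum_eq_single S₀]
    · simp [Finsupp.single_apply]
    · intro S' _ hne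
      have hne2 : (⟨l, (S', V)⟩ : Σ l : Λ, M l × M l) ≠ ⟨l, (S₀, V)⟩ := by
        intro hh
        obtain ⟨-, h2⟩ := Sigma.mk.inj_iff.1 hh
        exact hne (Prod.ext_iff.1 (eq_of_heq h2)).1
      rw [Finsupp.single_apply, if_neg hne2, mul_zero]
    · simp
  by_contra hne
  have : (⟨l, (S₀, V)⟩ : Σ l : Λ, M l × M l) ∈ (D.basis.repr (∑ S' : M l, c S' • D.C l S' V)).support := by
    rw [Finsupp.mem_support_iff, hrepr]; exact hne
  exact absurd (hmem this) (lt_irrefl l)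

lemma CD.indep_single {l : Λ} (d : R) (S V : M l)
    (h : d • D.C l S V ∈ D.Aless l) : d = 0 := by
  classical
  have h2 : (∑ S' : M l, (if S' = S then d else 0) • D.C l S' V) ∈ D.Aless l := by
    have : (∑ S' : M l, (if S' = S then d else 0) • D.C l S' V) = d • D.C l S V := by
      simp [ite_smul]
    rw [this]; exact h
  have := CD.indep D _ V h2 S
  simpa using this

end Aux

section Phi
variable (D : CellDatum R A Λ M) (l : Λ) (φ : M l → M l → R)

lemma CD.phi_symm (hφ : ∀ S₁ T₁ S₂ T₂ : M l,
      D.C l S₁ T₁ * D.C l S₂ T₂ - φ T₁ S₂ • D.C l S₁ T₂ ∈ D.Aless l)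
    (S T : M l) : φ S T = φ T S := by
  have h1 := CD.star_mem D (hφ S T S T)
  simp only [map_sub, map_smul, D.star_mul, D.star_C] at h1
  have h2 := hφ T S T S
  have h3 := Submodule.sub_mem _ h2 h1
  have e : (D.C l T S * D.C l T S - φ S T • D.C l T S) -
      (D.C l T S * D.C l T S - φ T S • D.C l T S) =
      (φ T S - φ S T) • D.C l T S := by
    rw [sub_smul]; abel
  rw [e] at h3
  exact (sub_eq_zero.1 (CD.indep_single D _ T S h3)).symm

lemma CD.r_C [DecidableEq (M l)] (hφ : ∀ S₁ T₁ S₂ T₂ : M l,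
      D.C l S₁ T₁ * D.C l S₂ T₂ - φ T₁ S₂ • D.C l S₁ T₂ ∈ D.Aless l)
    (S T U S' : M l) :
    D.r (D.C l S T) l S' U = if S' = S then φ T U else 0 := by
  have h1 := CD.mul_C' D (D.C l S T) l U U
  have h2 := hφ S T U U
  have h3 := Submodule.sub_mem _ h2 h1
  have e1 : φ T U • D.C l S U =
      ∑ S'' : M l, (if S'' = S then φ T U else 0) • D.C l S'' U := by
    simp [ite_smul]
  have e2 : ∑ S'' : M l, (D.r (D.C l S T) l S'' U - if S'' = S then φ T U else 0) • D.C l S'' U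
      = (∑ S'' : M l, D.r (D.C l S T) l S'' U • D.C l S'' U)
        - ∑ S'' : M l, (if S'' = S then φ T U else 0) • D.C l S'' U := by
    rw [← Finset.sum_sub_distrib]
    exact Finset.sum_congr rfl fun S'' _ => sub_smul _ _ _
  have h4 : (D.C l S T * D.C l U U - φ T U • D.C l S U) -
      (D.C l S T * D.C l U U - ∑ S'' : M l, D.r (D.C l S T) l S'' U • D.C l S'' U)
      = ∑ S'' : M l, (D.r (D.C l S T) l S'' U - if S'' = S then φ T U else 0) • D.C l S'' U := by
    rw [e1, e2]; abel
  rw [h4] at h3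
  exact sub_eq_zero.1 (CD.indep D _ U h3 S')

lemma CD.invariance (hφ : ∀ S₁ T₁ S₂ T₂ : M l,
      D.C l S₁ T₁ * D.C l S₂ T₂ - φ T₁ S₂ • D.C l S₁ T₂ ∈ D.Aless l)
    (a : A) (S U : M l) :
    ∑ S' : M l, D.r a l S' S * φ U S' = ∑ U' : M l, D.r (D.star a) l U' U * φ U' S := by
  set N := D.Aless l with hN
  set X := D.C l U U * (a * D.C l S S) with hX
  set c1 := ∑ S' : M l, D.r a l S' S * φ U S' with hc1
  set c2 := ∑ U' : M l, D.r (D.star a) l U' U * φ U' S with hc2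
  have step1 : X - ∑ S' : M l, D.r a l S' S • (D.C l U U * D.C l S' S) ∈ N := by
    have h := CD.mul_mem D (D.C l U U) (CD.mul_C' D a l S S)
    rw [mul_sub, Finset.mul_sum] at h
    simp_rw [mul_smul_comm] at h
    exact h
  have step2 : (∑ S' : M l, D.r a l S' S • (D.C l U U * D.C l S' S))
      - c1 • D.C l U S ∈ N := by
    rw [hc1, Finset.sum_smul, ← Finset.sum_sub_distrib]
    refine Submodule.sum_mem _ fun S' _ => ?_
    have h := Submodule.smul_mem (D.Aless l) (D.r a l S' S) (hφ U U S' S)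
    rwa [smul_sub, smul_smul] at h
  have step12 : X - c1 • D.C l U S ∈ N := by
    have h := Submodule.add_mem _ step1 step2
    rwa [sub_add_sub_cancel] at h
  have step3 : D.C l U U * a - ∑ U' : M l, D.r (D.star a) l U' U • D.C l U U' ∈ N := by
    have h := CD.star_mem D (CD.mul_C' D (D.star a) l U U)
    rw [map_sub, D.star_mul, D.star_star, D.star_C, map_sum] at h
    simp_rw [map_smul, D.star_C] at h
    exact h
  have step4 : X - ∑ U' : M l, D.r (D.star a) l U' U • (D.C l U U' * D.C l S S) ∈ N := by
    have h := CD.mem_mul D (D.C l S S) step3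
    rw [sub_mul, Finset.sum_mul] at h
    simp_rw [smul_mul_assoc] at h
    rw [hX]
    show D.C l U U * (a * D.C l S S) - _ ∈ N
    rw [← mul_assoc]
    exact h
  have step5 : (∑ U' : M l, D.r (D.star a) l U' U • (D.C l U U' * D.C l S S))
      - c2 • D.C l U S ∈ N := by
    rw [hc2, Finset.sum_smul, ← Finset.sum_sub_distrib]
    refine Submodule.sum_mem _ fun U' _ => ?_
    have h := Submodule.smul_mem (D.Aless l) (D.r (D.star a) l U' U) (hφ U U' S S)
    rwa [smul_sub, smul_smul] at h
  have step45 : X - c2 • D.C l U S ∈ N := by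
    have h := Submodule.add_mem _ step4 step5
    rwa [sub_add_sub_cancel] at h
  have hdiff := Submodule.sub_mem _ step12 step45
  have e : (X - c1 • D.C l U S) - (X - c2 • D.C l U S) = (c2 - c1) • D.C l U S := by
    rw [sub_smul]; abel
  rw [e] at hdiff
  exact (sub_eq_zero.1 (CD.indep_single D _ U S hdiff)).symm

end Phi

lemma CD.repr_smul (D : CellDatum R A Λ M) (l : Λ)
    (W : Type*) [AddCommGroup W] [Module R W] [Module A W] [IsScalarTower R A W]
    (b : Module.Basis (M l) R W)
    (hb : ∀ (a : A) (S : M l), a • b S = ∑ S' : M l, D.r a l S' S • b S')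
    (a : A) (x : W) (S' : M l) :
    b.repr (a • x) S' = ∑ S : M l, D.r a l S' S * b.repr x S := by
  have e : a • x = ∑ S' : M l, (∑ S : M l, D.r a l S' S * b.repr x S) • b S' := by
    conv_lhs => rw [← b.sum_repr x]
    rw [Finset.smul_sum]
    rw [Finset.sum_congr rfl fun S _ => smul_comm a (b.repr x S) (b S)]
    simp_rw [hb, Finset.smul_sum, smul_smul]
    rw [Finset.sum_comm]
    exact Finset.sum_congr rfl fun S' _ => by
      rw [Finset.sum_smul]
      exact Finset.sum_congr rfl fun S _ => by rw [mul_comm]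
  rw [e, b.repr_sum_self]

/-- let `R` be a field, `W = W(λ)` the cell representation of `A`
corresponding to `λ` (an `A`-module with `R`-basis `(C_S)_{S ∈ M(λ)}` on which
`a • C_S = Σ_{S'} r_a(S',S) • C_{S'}`), and let `φ` satisfy the conclusion of Lemma
1.1.3, with associated bilinear form `φ_λ(x,y) = Σ_{S,T} x_S · φ(S,T) · y_T` in basis
coordinates.  Then `rad(λ) = {x : φ_λ(x,y) = 0 for all y}` is an `A`-submodule of `W`,
and if `φ ≠ 0` then `W/rad(λ)` is a simple `A`-module. -/
theorem rad_is_submodule_and_quotient_simple (R A Λ : Type*) [Field R] [Ring A]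
    [Algebra R A] [PartialOrder Λ] (M : Λ → Type*) [∀ l, Fintype (M l)]
    (D : CellDatum R A Λ M) (l : Λ) (φ : M l → M l → R)
    (hφ : ∀ S₁ T₁ S₂ T₂ : M l,
      D.C l S₁ T₁ * D.C l S₂ T₂ - φ T₁ S₂ • D.C l S₁ T₂ ∈ D.Aless l)
    (W : Type*) [AddCommGroup W] [Module R W] [Module A W] [IsScalarTower R A W]
    (b : Module.Basis (M l) R W)
    (hb : ∀ (a : A) (S : M l), a • b S = ∑ S' : M l, D.r a l S' S • b S') :
    ∃ rad : Submodule A W,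
      (rad : Set W) = {x : W | ∀ y : W,
        (∑ S : M l, ∑ T : M l, b.repr x S * φ S T * b.repr y T) = 0} ∧
      (φ ≠ 0 → IsSimpleModule A (W ⧸ rad)) := by
  classical
  have hsym : ∀ S T : M l, φ S T = φ T S := CD.phi_symm D l φ hφ
  have hinv := CD.invariance D l φ hφ
  have hrC : ∀ S T U S' : M l,
      D.r (D.C l S T) l S' U = if S' = S then φ T U else 0 := CD.r_C D l φ hφ
  have hrepr : ∀ (a : A) (x : W) (S' : M l),
      b.repr (a • x) S' = ∑ S : M l, D.r a l S' S * b.repr x S :=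
    CD.repr_smul D l W b hb
  set g : W → M l → R := fun x T => ∑ S : M l, b.repr x S * φ S T with hg
  have hBg : ∀ x y : W, (∑ S : M l, ∑ T : M l, b.repr x S * φ S T * b.repr y T)
      = ∑ T : M l, g x T * b.repr y T := by
    intro x y
    rw [Finset.sum_comm]
    refine Finset.sum_congr rfl fun T _ => ?_
    rw [hg]
    simp only
    rw [Finset.sum_mul]
  have hBbT : ∀ (x : W) (T : M l),
      (∑ S : M l, ∑ T' : M l, b.repr x S * φ S T' * b.repr (b T) T') = g x T := by
    intro x T
    rw [hBg]
    simp [Finsupp.single_apply, mul_ite, mul_one, mul_zero, Finset.sum_ite_eq]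
  have hmemiff : ∀ x : W,
      (∀ y : W, (∑ S : M l, ∑ T : M l, b.repr x S * φ S T * b.repr y T) = 0)
        ↔ (∀ T : M l, g x T = 0) := by
    intro x
    constructor
    · intro h T; rw [← hBbT x T]; exact h _
    · intro h y
      rw [hBg x y]
      simp only [h, zero_mul, Finset.sum_const_zero]
  have hkey : ∀ (a : A) (x : W) (T : M l),
      g (a • x) T = ∑ T' : M l, D.r (D.star a) l T' T * g x T' := by
    intro a x T
    have lhs1 : g (a • x) T
        = ∑ S₁ : M l, b.repr x S₁ * ∑ S : M l, D.r a l S S₁ * φ T S := by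
      rw [hg]
      simp only
      simp_rw [hrepr a x, Finset.sum_mul]
      rw [Finset.sum_comm]
      refine Finset.sum_congr rfl fun S₁ _ => ?_
      rw [Finset.mul_sum]
      refine Finset.sum_congr rfl fun S _ => ?_
      rw [hsym S T]; ring
    rw [lhs1]
    simp_rw [hinv a _ T]
    have e : ∀ S₁ : M l, b.repr x S₁ * (∑ T' : M l, D.r (D.star a) l T' T * φ T' S₁)
        = ∑ T' : M l, D.r (D.star a) l T' T * (b.repr x S₁ * φ S₁ T') := by
      intro S₁
      rw [Finset.mul_sum]
      refine Finset.sum_congr rfl fun T' _ => ?_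
      rw [hsym S₁ T']; ring
    simp_rw [e]
    rw [Finset.sum_comm]
    refine Finset.sum_congr rfl fun T' _ => ?_
    rw [hg]
    simp only
    rw [Finset.mul_sum]
  let rad : Submodule A W :=
    { carrier := {x : W | ∀ y : W,
        (∑ S : M l, ∑ T : M l, b.repr x S * φ S T * b.repr y T) = 0}
      add_mem' := by
        intro x y hx hy
        intro z
        simp only [Set.mem_setOf_eq] at hx hy
        simp only [map_add, Finsupp.add_apply, add_mul, Finset.sum_add_distrib]
        rw [hx z, hy z, add_zero]
      zero_mem' := by
        intro y
        simp
      smul_mem' := by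
        intro a x hx
        simp only [Set.mem_setOf_eq] at hx ⊢
        rw [hmemiff (a • x)]
        intro T
        rw [hkey a x T]
        simp only [(hmemiff x).1 hx, mul_zero, Finset.sum_const_zero] }
  have hradmem : ∀ x : W, x ∈ rad ↔ ∀ T : M l, g x T = 0 := fun x => hmemiff x
  refine ⟨rad, rfl, ?_⟩
  intro hφ0
  obtain ⟨S₁, hS₁⟩ : ∃ S, φ S ≠ 0 := by
    by_contra h; push_neg at h; exact hφ0 (funext h)
  obtain ⟨T₁, hST⟩ : ∃ T, φ S₁ T ≠ 0 := by
    by_contra h; push_neg at h; exact hS₁ (funext h)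
  have hgb : g (b S₁) T₁ = φ S₁ T₁ := by
    rw [hg]
    simp [Finsupp.single_apply, ite_mul, one_mul, zero_mul, Finset.sum_ite_eq]
  have hgen : ∀ x : W, (∃ T, g x T ≠ 0) → ∀ S₀ : M l, b S₀ ∈ Submodule.span A {x} := by
    rintro x ⟨T, hT⟩ S₀
    have hact : D.C l S₀ T • x = g x T • b S₀ := by
      apply b.repr.injective
      ext S'
      rw [hrepr]
      simp only [hrC, map_smul, Finsupp.smul_apply, Module.Basis.repr_self_apply,
        smul_eq_mul, ite_mul, zero_mul]
      by_cases h : S' = S₀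
      · subst h
        simp only [if_pos rfl, if_true, mul_one]
        rw [hg]
        simp only
        exact Finset.sum_congr rfl fun S₂ _ => by rw [hsym S₂ T]; ring
      · simp [h, Ne.symm h]
    have hinvx : ((g x T)⁻¹ • D.C l S₀ T) • x = b S₀ := by
      rw [smul_assoc, hact, smul_smul, inv_mul_cancel₀ hT, one_smul]
    rw [← hinvx]
    exact Submodule.smul_mem _ _ (Submodule.mem_span_singleton_self x)
  have hspan : ∀ x : W, (∃ T, g x T ≠ 0) → Submodule.span A {x} = ⊤ := by
    intro x hx
    rw [eq_top_iff]
    intro w _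
    rw [← b.sum_repr w]
    refine Submodule.sum_mem _ fun S _ => ?_
    rw [← algebraMap_smul A (b.repr w S) (b S)]
    exact Submodule.smul_mem _ _ (hgen x hx S)
  have hnt : Nontrivial (W ⧸ rad) := by
    refine ⟨Submodule.Quotient.mk (b S₁), 0, ?_⟩
    rw [Ne, Submodule.Quotient.mk_eq_zero]
    intro hmem
    exact hST (hgb ▸ (hradmem (b S₁)).1 hmem T₁)
  haveI := hnt
  refine { toIsSimpleOrder := ⟨fun N => ?_⟩ }
  by_cases hN : N = ⊥
  · exact Or.inl hN
  · refine Or.inr ?_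
    obtain ⟨z, hzN, hz0⟩ := (Submodule.ne_bot_iff N).1 hN
    obtain ⟨x, rfl⟩ := rad.mkQ_surjective z
    have hxrad : x ∉ rad := by
      intro h
      apply hz0
      rw [Submodule.mkQ_apply, Submodule.Quotient.mk_eq_zero]
      exact h
    have hx : ∃ T, g x T ≠ 0 := by
      by_contra h; push_neg at h
      exact hxrad ((hradmem x).2 h)
    rw [eq_top_iff]
    intro w _
    obtain ⟨v, rfl⟩ := rad.mkQ_surjective w
    have hv : v ∈ Submodule.span A {x} := (hspan x hx).symm ▸ Submodule.mem_top
    have h1 : rad.mkQ v ∈ Submodule.map rad.mkQ (Submodule.span A {x}) :=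
      Submodule.mem_map_of_mem hv
    rw [Submodule.map_span, Set.image_singleton] at h1
    have h2 : Submodule.span A {rad.mkQ x} ≤ N :=
      Submodule.span_le.2 (Set.singleton_subset_iff.2 hzN)
    exact h2 h1
end
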